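/- Let t₀ < t_f be real numbers, let ε > 0 with ε ≤ t_f − t₀, and let d ≥ 1 be an integer. There exists an open dense subset S of (ℂ^{d×d})⁴ (product of standard topologies on matrix spaces) such that for every quadruple (c₋₁, c₀, c₁, α) ∈ S and every function f : ℝ → ℂ^d there exists a unique function u : ℝ → ℂ^d satisfying, for every t ∈ ℝ, α ⬝ u(t) + Σ_{k=−1}^{1} χ(t+kε) · (c_k ⬝ u(t+kε)) = f(t). -/

import Mathlib

open Matrix

/-- The indicator function of the closed interval `[t₀, t_f]`. -/
noncomputable def chi (t₀ t_f : ℝ) : ℝ → ℝ :=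
  Set.indicator (Set.Icc t₀ t_f) (fun _ => (1 : ℝ))

open Polynomial

noncomputable def Ai (t₀ ε t : ℝ) : ℤ := ⌈(t₀ - t) / ε⌉
noncomputable def Bi (t_f ε t : ℝ) : ℤ := ⌊(t_f - t) / ε⌋
noncomputable def mI (t₀ t_f ε t : ℝ) : ℕ := (Bi t_f ε t - Ai t₀ ε t + 1).toNat

section idx
variable {t₀ t_f ε : ℝ}

lemma mem_Icc_iff (hε : 0 < ε) (t : ℝ) (k : ℤ) :
    t + (k : ℝ) * ε ∈ Set.Icc t₀ t_f ↔ Ai t₀ ε t ≤ k ∧ k ≤ Bi t_f ε t := by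
  rw [Set.mem_Icc, Ai, Bi, Int.ceil_le, Int.le_floor]
  constructor
  · rintro ⟨h1, h2⟩
    constructor
    · rw [div_le_iff₀ hε]; linarith
    · rw [le_div_iff₀ hε]; linarith
  · rintro ⟨h1, h2⟩
    rw [div_le_iff₀ hε] at h1
    rw [le_div_iff₀ hε] at h2
    constructor <;> linarith

lemma chi_eq (hε : 0 < ε) (t : ℝ) (k : ℤ) :
    chi t₀ t_f (t + (k : ℝ) * ε)
      = if Ai t₀ ε t ≤ k ∧ k ≤ Bi t_f ε t then 1 else 0 := by
  rw [chi, Set.indicator_apply]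
  by_cases h : t + (k : ℝ) * ε ∈ Set.Icc t₀ t_f
  · rw [if_pos h, if_pos ((mem_Icc_iff hε t k).mp h)]
  · rw [if_neg h, if_neg (fun hc => h ((mem_Icc_iff hε t k).mpr hc))]

lemma Ai_shift (hε : 0 < ε) (t : ℝ) (k : ℤ) :
    Ai t₀ ε (t + (k : ℝ) * ε) = Ai t₀ ε t - k := by
  have hne : ε ≠ 0 := ne_of_gt hε
  rw [Ai, Ai, ← Int.ceil_sub_intCast]
  congr 1
  field_simp
  ring

lemma Bi_shift (hε : 0 < ε) (t : ℝ) (k : ℤ) :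
    Bi t_f ε (t + (k : ℝ) * ε) = Bi t_f ε t - k := by
  have hne : ε ≠ 0 := ne_of_gt hε
  rw [Bi, Bi, ← Int.floor_sub_intCast]
  congr 1
  field_simp
  ring

lemma mI_shift (hε : 0 < ε) (t : ℝ) (k : ℤ) :
    mI t₀ t_f ε (t + (k : ℝ) * ε) = mI t₀ t_f ε t := by
  rw [mI, mI, Ai_shift hε, Bi_shift hε]
  congr 1
  ring

lemma Ai_le_Bi (hε : 0 < ε) (hεle : ε ≤ t_f - t₀) (t : ℝ) : Ai t₀ ε t ≤ Bi t_f ε t := by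
  rw [Ai, Bi, Int.le_floor]
  refine le_of_lt (lt_of_lt_of_le (Int.ceil_lt_add_one _) ?_)
  rw [div_add' _ _ _ (ne_of_gt hε), div_le_div_iff₀ hε hε]
  nlinarith

lemma mI_cast (hε : 0 < ε) (hεle : ε ≤ t_f - t₀) (t : ℝ) :
    (mI t₀ t_f ε t : ℤ) = Bi t_f ε t - Ai t₀ ε t + 1 := by
  have := Ai_le_Bi hε hεle t
  rw [mI, Int.toNat_of_nonneg (by omega)]

lemma mI_pos (hε : 0 < ε) (hεle : ε ≤ t_f - t₀) (t : ℝ) : 0 < mI t₀ t_f ε t := by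
  have h1 := mI_cast hε hεle t
  have h2 := Ai_le_Bi hε hεle t
  omega

lemma mI_le (hε : 0 < ε) (hεle : ε ≤ t_f - t₀) (t : ℝ) :
    mI t₀ t_f ε t ≤ (⌊(t_f - t₀) / ε⌋).toNat + 1 := by
  have h1 : (Bi t_f ε t : ℝ) ≤ (t_f - t) / ε := Int.floor_le _
  have h2 : (t₀ - t) / ε ≤ (Ai t₀ ε t : ℝ) := Int.le_ceil _
  have hBA : Bi t_f ε t - Ai t₀ ε t ≤ ⌊(t_f - t₀) / ε⌋ := by
    rw [Int.le_floor]
    push_cast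
    have h3 : (t_f - t) / ε - (t₀ - t) / ε = (t_f - t₀) / ε := by
      field_simp
      ring
    linarith
  have h4 : (0:ℤ) ≤ ⌊(t_f - t₀) / ε⌋ := by
    apply Int.floor_nonneg.mpr
    apply div_nonneg (by linarith) (le_of_lt hε)
  rw [mI]
  omega
end idx

variable {d : ℕ}

/-- diagonal part -/
noncomputable def Dmat (N mm : ℕ) (c0 α : Matrix (Fin d) (Fin d) ℂ) :
    Matrix (Fin N × Fin d) (Fin N × Fin d) ℂ :=
  Matrix.of fun p q =>
    if p.1 = q.1 then (if (p.1 : ℕ) < mm then α + c0 else α) p.2 q.2 else 0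

noncomputable def Umat (N mm : ℕ) (c1 : Matrix (Fin d) (Fin d) ℂ) :
    Matrix (Fin N × Fin d) (Fin N × Fin d) ℂ :=
  Matrix.of fun p q =>
    if (q.1 : ℕ) = (p.1 : ℕ) + 1 ∧ (q.1 : ℕ) < mm then c1 p.2 q.2 else 0

noncomputable def Lmat (N mm : ℕ) (cm : Matrix (Fin d) (Fin d) ℂ) :
    Matrix (Fin N × Fin d) (Fin N × Fin d) ℂ :=
  Matrix.of fun p q =>
    if (p.1 : ℕ) = (q.1 : ℕ) + 1 ∧ (p.1 : ℕ) < mm then cm p.2 q.2 else 0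

noncomputable def padM (N mm : ℕ) (cm c0 c1 α : Matrix (Fin d) (Fin d) ℂ) :
    Matrix (Fin N × Fin d) (Fin N × Fin d) ℂ :=
  Dmat N mm c0 α + Umat N mm c1 + Lmat N mm cm

lemma Dmat_mulVec (N mm : ℕ) (c0 α : Matrix (Fin d) (Fin d) ℂ)
    (W : Fin N × Fin d → ℂ) (i : Fin N) (x : Fin d) :
    (Dmat N mm c0 α).mulVec W (i, x)
      = (if (i : ℕ) < mm then α + c0 else α).mulVec (fun y => W (i, y)) x := by
  classical
  simp only [Matrix.mulVec, dotProduct, Dmat, Matrix.of_apply]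
  rw [Fintype.sum_prod_type]
  rw [Finset.sum_eq_single i]
  · simp [Matrix.mulVec, dotProduct]
  · intro j _ hj
    simp [Ne.symm hj, (by simpa using (Ne.symm hj) : ¬ i = j)]
  · simp

lemma Umat_mulVec_eq (N mm : ℕ) (c1 : Matrix (Fin d) (Fin d) ℂ)
    (W : Fin N × Fin d → ℂ) (i j : Fin N) (x : Fin d)
    (hj : (j : ℕ) = (i : ℕ) + 1) (hlt : (j : ℕ) < mm) :
    (Umat N mm c1).mulVec W (i, x) = c1.mulVec (fun y => W (j, y)) x := by
  classical
  simp only [Matrix.mulVec, dotProduct, Umat, Matrix.of_apply]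
  rw [Fintype.sum_prod_type]
  rw [Finset.sum_eq_single j]
  · simp [hj, show ((i:ℕ)+1 < mm) by omega, Matrix.mulVec, dotProduct]
  · intro j' _ hj'
    have : ¬ ((j' : ℕ) = (i : ℕ) + 1 ∧ (j' : ℕ) < mm) := by
      rintro ⟨h1, _⟩
      exact hj' (Fin.ext (by omega))
    simp [this]
  · simp

lemma Umat_mulVec_zero (N mm : ℕ) (c1 : Matrix (Fin d) (Fin d) ℂ)
    (W : Fin N × Fin d → ℂ) (i : Fin N) (x : Fin d)
    (h : ¬ ((i : ℕ) + 1 < mm)) :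
    (Umat N mm c1).mulVec W (i, x) = 0 := by
  classical
  simp only [Matrix.mulVec, dotProduct, Umat, Matrix.of_apply]
  apply Finset.sum_eq_zero
  rintro ⟨j, y⟩ _
  have : ¬ ((j : ℕ) = (i : ℕ) + 1 ∧ (j : ℕ) < mm) := by
    rintro ⟨h1, h2⟩; omega
  simp [this]

lemma Lmat_mulVec_eq (N mm : ℕ) (cm : Matrix (Fin d) (Fin d) ℂ)
    (W : Fin N × Fin d → ℂ) (i j : Fin N) (x : Fin d)
    (hj : (i : ℕ) = (j : ℕ) + 1) (hlt : (i : ℕ) < mm) :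
    (Lmat N mm cm).mulVec W (i, x) = cm.mulVec (fun y => W (j, y)) x := by
  classical
  simp only [Matrix.mulVec, dotProduct, Lmat, Matrix.of_apply]
  rw [Fintype.sum_prod_type]
  rw [Finset.sum_eq_single j]
  · simp [hj, show ((j:ℕ)+1 < mm) by omega, Matrix.mulVec, dotProduct]
  · intro j' _ hj'
    have : ¬ ((i : ℕ) = (j' : ℕ) + 1 ∧ (i : ℕ) < mm) := by
      rintro ⟨h1, _⟩
      exact hj' (Fin.ext (by omega))
    simp [this]
  · simp

lemma Lmat_mulVec_zero (N mm : ℕ) (cm : Matrix (Fin d) (Fin d) ℂ)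
    (W : Fin N × Fin d → ℂ) (i : Fin N) (x : Fin d)
    (h : ¬ (0 < (i : ℕ) ∧ (i : ℕ) < mm)) :
    (Lmat N mm cm).mulVec W (i, x) = 0 := by
  classical
  simp only [Matrix.mulVec, dotProduct, Lmat, Matrix.of_apply]
  apply Finset.sum_eq_zero
  rintro ⟨j, y⟩ _
  have : ¬ ((i : ℕ) = (j : ℕ) + 1 ∧ (i : ℕ) < mm) := by
    rintro ⟨h1, h2⟩; omega
  simp [this]

lemma padM_shift (N mm : ℕ) (cm c0 c1 α : Matrix (Fin d) (Fin d) ℂ) (z : ℂ) :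
    padM N mm cm c0 c1 (α + z • (1 : Matrix (Fin d) (Fin d) ℂ))
      = padM N mm cm c0 c1 α + z • (1 : Matrix (Fin N × Fin d) (Fin N × Fin d) ℂ) := by
  classical
  ext ⟨i, x⟩ ⟨j, y⟩
  by_cases h : i = j
  · subst h
    by_cases h2 : (i : ℕ) < mm <;> by_cases h3 : x = y <;>
      simp [padM, Dmat, Umat, Lmat, h2, h3, Matrix.one_apply, Prod.ext_iff,
        Matrix.add_apply, Matrix.smul_apply] <;> ring
  · have hne : ¬ ((i, x) = (j, y)) := by simp [Prod.ext_iff]; tauto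
    simp [padM, Dmat, Umat, Lmat, h, hne, Matrix.one_apply]

section sol
variable {d : ℕ} (t₀ t_f ε : ℝ) (N : ℕ) (cm c0 c1 α : Matrix (Fin d) (Fin d) ℂ)
  (f : ℝ → Fin d → ℂ)

/-- right-hand-side data vector of the finite linear system based at `t` -/
noncomputable def Gv (t : ℝ) : Fin N × Fin d → ℂ :=
  fun q => if (q.1 : ℕ) < mI t₀ t_f ε t
    then f (t + ((Ai t₀ ε t + (q.1 : ℕ) : ℤ) : ℝ) * ε) q.2 else 0

/-- solution vector of the finite linear system based at `t` -/
noncomputable def Wv (t : ℝ) : Fin N × Fin d → ℂ :=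
  (padM N (mI t₀ t_f ε t) cm c0 c1 α)⁻¹.mulVec (Gv t₀ t_f ε N f t)

/-- candidate solution at points inside the interval -/
noncomputable def wI (hN : 0 < N) (t : ℝ) : Fin d → ℂ :=
  fun x => Wv t₀ t_f ε N cm c0 c1 α f t
    (⟨(-(Ai t₀ ε t)).toNat % N, Nat.mod_lt _ hN⟩, x)

/-- the candidate solution -/
noncomputable def uSol (hN : 0 < N) (t : ℝ) : Fin d → ℂ :=
  if t ∈ Set.Icc t₀ t_f then wI t₀ t_f ε N cm c0 c1 α f hN t
  else α⁻¹.mulVec (f t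
    - chi t₀ t_f (t - ε) • cm.mulVec (wI t₀ t_f ε N cm c0 c1 α f hN (t - ε))
    - chi t₀ t_f (t + ε) • c1.mulVec (wI t₀ t_f ε N cm c0 c1 α f hN (t + ε)))

variable {t₀ t_f ε : ℝ}

lemma Gv_shift (hε : 0 < ε) (t : ℝ) (k : ℤ) :
    Gv t₀ t_f ε N f (t + (k : ℝ) * ε) = Gv t₀ t_f ε N f t := by
  funext q
  rw [Gv, Gv, mI_shift hε, Ai_shift hε]
  by_cases h : (q.1 : ℕ) < mI t₀ t_f ε t
  · rw [if_pos h, if_pos h]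
    have harg : t + (k : ℝ) * ε + ((Ai t₀ ε t - k + (q.1 : ℕ) : ℤ) : ℝ) * ε
        = t + ((Ai t₀ ε t + (q.1 : ℕ) : ℤ) : ℝ) * ε := by push_cast; ring
    rw [harg]
  · rw [if_neg h, if_neg h]

lemma Wv_shift (hε : 0 < ε) (t : ℝ) (k : ℤ) :
    Wv t₀ t_f ε N cm c0 c1 α f (t + (k : ℝ) * ε) = Wv t₀ t_f ε N cm c0 c1 α f t := by
  rw [Wv, Wv, mI_shift hε, Gv_shift N f hε]

lemma wI_shift (hN : 0 < N) (hε : 0 < ε) (t : ℝ) (k : ℤ) :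
    wI t₀ t_f ε N cm c0 c1 α f hN (t + (k : ℝ) * ε)
      = fun x => Wv t₀ t_f ε N cm c0 c1 α f t
          (⟨(k - Ai t₀ ε t).toNat % N, Nat.mod_lt _ hN⟩, x) := by
  funext x
  have h2 : (⟨(-(Ai t₀ ε (t + (k : ℝ) * ε))).toNat % N, Nat.mod_lt _ hN⟩ : Fin N)
      = ⟨(k - Ai t₀ ε t).toNat % N, Nat.mod_lt _ hN⟩ := by
    apply Fin.ext
    simp only [Ai_shift hε, neg_sub]
  rw [wI, Wv_shift N cm c0 c1 α f hε]
  exact congrArg (fun i => Wv t₀ t_f ε N cm c0 c1 α f t (i, x)) h2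

end sol

section main
variable {d : ℕ} {t₀ t_f ε : ℝ} {N : ℕ} {cm c0 c1 α : Matrix (Fin d) (Fin d) ℂ}

lemma padM_expand (mm : ℕ) (W : Fin N × Fin d → ℂ) (i : Fin N) (x : Fin d) :
    (padM N mm cm c0 c1 α).mulVec W (i, x)
      = (Dmat N mm c0 α).mulVec W (i, x) + (Umat N mm c1).mulVec W (i, x)
        + (Lmat N mm cm).mulVec W (i, x) := by
  rw [padM, Matrix.add_mulVec, Matrix.add_mulVec]
  rfl

theorem uSol_solves (hε : 0 < ε) (hεle : ε ≤ t_f - t₀) (hN : 0 < N)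
    (hNB : ∀ t, mI t₀ t_f ε t ≤ N)
    (hα : IsUnit α.det)
    (hdet : ∀ mm, mm ≤ N → IsUnit (padM N mm cm c0 c1 α).det)
    (f : ℝ → Fin d → ℂ) (t : ℝ) :
    α.mulVec (uSol t₀ t_f ε N cm c0 c1 α f hN t)
      + (chi t₀ t_f (t - ε) • cm.mulVec (uSol t₀ t_f ε N cm c0 c1 α f hN (t - ε))
        + chi t₀ t_f t • c0.mulVec (uSol t₀ t_f ε N cm c0 c1 α f hN t)
        + chi t₀ t_f (t + ε) • c1.mulVec (uSol t₀ t_f ε N cm c0 c1 α f hN (t + ε))) = f t := by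
  have hmemk : ∀ k : ℤ, (t + (k : ℝ) * ε ∈ Set.Icc t₀ t_f ↔ Ai t₀ ε t ≤ k ∧ k ≤ Bi t_f ε t) :=
    mem_Icc_iff hε t
  have hmc : (mI t₀ t_f ε t : ℤ) = Bi t_f ε t - Ai t₀ ε t + 1 := mI_cast hε hεle t
  have hmN : mI t₀ t_f ε t ≤ N := hNB t
  have hts : t - ε = t + ((-1 : ℤ) : ℝ) * ε := by push_cast; ring
  have hts' : t + ε = t + ((1 : ℤ) : ℝ) * ε := by push_cast; ring
  by_cases ht : t ∈ Set.Icc t₀ t_f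
  · -- interior case
    have h0 : Ai t₀ ε t ≤ 0 ∧ 0 ≤ Bi t_f ε t := (hmemk 0).mp (by simpa using ht)
    set A := Ai t₀ ε t with hA
    set B := Bi t_f ε t with hB
    set m := mI t₀ t_f ε t with hm
    set i₀ := (-A).toNat with hi₀def
    have hi₀ : (i₀ : ℤ) = -A := Int.toNat_of_nonneg (by omega)
    have hi₀m : i₀ < m := by omega
    have hi₀N : i₀ < N := lt_of_lt_of_le hi₀m hmN
    have hmul : (padM N m cm c0 c1 α).mulVec (Wv t₀ t_f ε N cm c0 c1 α f t)
        = Gv t₀ t_f ε N f t := by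
      rw [Wv, ← hm, Matrix.mulVec_mulVec, Matrix.mul_nonsing_inv _ (hdet m hmN),
        Matrix.one_mulVec]
    funext x
    have hrow := congrFun hmul (⟨i₀, hi₀N⟩, x)
    rw [padM_expand, Dmat_mulVec] at hrow
    rw [if_pos (show ((⟨i₀, hi₀N⟩ : Fin N) : ℕ) < m from hi₀m)] at hrow
    have hGv : Gv t₀ t_f ε N f t (⟨i₀, hi₀N⟩, x) = f t x := by
      rw [Gv]
      rw [if_pos (show i₀ < m from hi₀m)]
      have : t + ((A + ((i₀ : ℕ) : ℤ) : ℤ) : ℝ) * ε = t := by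
        rw [show (A + ((i₀ : ℕ) : ℤ) : ℤ) = 0 by omega]
        norm_num
      rw [this]
    rw [hGv] at hrow
    -- rewrite the goal
    have hχt : chi t₀ t_f t = 1 := Set.indicator_of_mem ht _
    have hwt : uSol t₀ t_f ε N cm c0 c1 α f hN t
        = fun x' => Wv t₀ t_f ε N cm c0 c1 α f t (⟨i₀, hi₀N⟩, x') := by
      rw [uSol, if_pos ht]
      funext x'
      rw [wI]
      exact congrArg (fun i => Wv t₀ t_f ε N cm c0 c1 α f t (i, x'))
        (Fin.ext (by show (-(Ai t₀ ε t)).toNat % N = i₀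
                     rw [← hA, ← hi₀def, Nat.mod_eq_of_lt hi₀N]))
    rw [Matrix.add_mulVec] at hrow
    by_cases hLc : 0 < i₀
    · -- t - ε ∈ Icc
      have hmem : t - ε ∈ Set.Icc t₀ t_f := by
        rw [hts]; exact (hmemk (-1)).mpr ⟨by omega, by omega⟩
      have hχm : chi t₀ t_f (t - ε) = 1 := Set.indicator_of_mem hmem _
      have hi₁N : i₀ - 1 < N := by omega
      have hwm : uSol t₀ t_f ε N cm c0 c1 α f hN (t - ε)
          = fun x' => Wv t₀ t_f ε N cm c0 c1 α f t (⟨i₀ - 1, hi₁N⟩, x') := by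
        rw [uSol, if_pos hmem, hts, wI_shift N cm c0 c1 α f hN hε t (-1)]
        funext x'
        refine congrArg (fun i => Wv t₀ t_f ε N cm c0 c1 α f t (i, x')) (Fin.ext ?_)
        show ((-1 : ℤ) - Ai t₀ ε t).toNat % N = i₀ - 1
        rw [← hA, show ((-1 : ℤ) - A).toNat = i₀ - 1 by omega, Nat.mod_eq_of_lt hi₁N]
      rw [Lmat_mulVec_eq N m cm _ ⟨i₀, hi₀N⟩ ⟨i₀ - 1, hi₁N⟩ x
        (by omega : i₀ = i₀ - 1 + 1) hi₀m] at hrow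
      by_cases hUc : i₀ + 1 < m
      · have hmem' : t + ε ∈ Set.Icc t₀ t_f := by
          rw [hts']; exact (hmemk 1).mpr ⟨by omega, by omega⟩
        have hχp : chi t₀ t_f (t + ε) = 1 := Set.indicator_of_mem hmem' _
        have hi₂N : i₀ + 1 < N := lt_of_lt_of_le hUc hmN
        have hwp : uSol t₀ t_f ε N cm c0 c1 α f hN (t + ε)
            = fun x' => Wv t₀ t_f ε N cm c0 c1 α f t (⟨i₀ + 1, hi₂N⟩, x') := by
          rw [uSol, if_pos hmem', hts', wI_shift N cm c0 c1 α f hN hε t 1]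
          funext x'
          refine congrArg (fun i => Wv t₀ t_f ε N cm c0 c1 α f t (i, x')) (Fin.ext ?_)
          show ((1 : ℤ) - Ai t₀ ε t).toNat % N = i₀ + 1
          rw [← hA, show ((1 : ℤ) - A).toNat = i₀ + 1 by omega, Nat.mod_eq_of_lt hi₂N]
        rw [Umat_mulVec_eq N m c1 _ ⟨i₀, hi₀N⟩ ⟨i₀ + 1, hi₂N⟩ x rfl hUc] at hrow
        rw [hwt, hwm, hwp, hχt, hχm, hχp]
        simp only [Pi.add_apply] at hrow
        simp only [Pi.add_apply, Pi.smul_apply, one_smul]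
        linear_combination hrow
      · have hmem' : t + ε ∉ Set.Icc t₀ t_f := by
          rw [hts']; intro hc; have := (hmemk 1).mp hc; omega
        have hχp : chi t₀ t_f (t + ε) = 0 := Set.indicator_of_notMem hmem' _
        rw [Umat_mulVec_zero N m c1 _ ⟨i₀, hi₀N⟩ x
          (by show ¬(i₀ + 1 < m); omega)] at hrow
        rw [hwt, hwm, hχt, hχm, hχp]
        simp only [Pi.add_apply] at hrow
        simp only [Pi.add_apply, Pi.smul_apply, one_smul, zero_smul, Pi.zero_apply]
        linear_combination hrow
    · -- t - ε ∉ Icc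
      have hmem : t - ε ∉ Set.Icc t₀ t_f := by
        rw [hts]; intro hc; have := (hmemk (-1)).mp hc; omega
      have hχm : chi t₀ t_f (t - ε) = 0 := Set.indicator_of_notMem hmem _
      rw [Lmat_mulVec_zero N m cm _ ⟨i₀, hi₀N⟩ x
        (by show ¬(0 < i₀ ∧ i₀ < m); omega)] at hrow
      by_cases hUc : i₀ + 1 < m
      · have hmem' : t + ε ∈ Set.Icc t₀ t_f := by
          rw [hts']; exact (hmemk 1).mpr ⟨by omega, by omega⟩
        have hχp : chi t₀ t_f (t + ε) = 1 := Set.indicator_of_mem hmem' _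
        have hi₂N : i₀ + 1 < N := lt_of_lt_of_le hUc hmN
        have hwp : uSol t₀ t_f ε N cm c0 c1 α f hN (t + ε)
            = fun x' => Wv t₀ t_f ε N cm c0 c1 α f t (⟨i₀ + 1, hi₂N⟩, x') := by
          rw [uSol, if_pos hmem', hts', wI_shift N cm c0 c1 α f hN hε t 1]
          funext x'
          refine congrArg (fun i => Wv t₀ t_f ε N cm c0 c1 α f t (i, x')) (Fin.ext ?_)
          show ((1 : ℤ) - Ai t₀ ε t).toNat % N = i₀ + 1
          rw [← hA, show ((1 : ℤ) - A).toNat = i₀ + 1 by omega, Nat.mod_eq_of_lt hi₂N]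
        rw [Umat_mulVec_eq N m c1 _ ⟨i₀, hi₀N⟩ ⟨i₀ + 1, hi₂N⟩ x rfl hUc] at hrow
        rw [hwt, hwp, hχt, hχm, hχp]
        simp only [Pi.add_apply] at hrow
        simp only [Pi.add_apply, Pi.smul_apply, one_smul, zero_smul, Pi.zero_apply]
        linear_combination hrow
      · have hmem' : t + ε ∉ Set.Icc t₀ t_f := by
          rw [hts']; intro hc; have := (hmemk 1).mp hc; omega
        have hχp : chi t₀ t_f (t + ε) = 0 := Set.indicator_of_notMem hmem' _
        rw [Umat_mulVec_zero N m c1 _ ⟨i₀, hi₀N⟩ x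
          (by show ¬(i₀ + 1 < m); omega)] at hrow
        rw [hwt, hχt, hχm, hχp]
        simp only [Pi.add_apply] at hrow
        simp only [Pi.add_apply, Pi.smul_apply, one_smul, zero_smul, Pi.zero_apply]
        linear_combination hrow
  · -- exterior case
    have hχt : chi t₀ t_f t = 0 := Set.indicator_of_notMem ht _
    have hout : uSol t₀ t_f ε N cm c0 c1 α f hN t
        = α⁻¹.mulVec (f t
          - chi t₀ t_f (t - ε) • cm.mulVec (wI t₀ t_f ε N cm c0 c1 α f hN (t - ε))
          - chi t₀ t_f (t + ε) • c1.mulVec (wI t₀ t_f ε N cm c0 c1 α f hN (t + ε))) := by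
      rw [uSol, if_neg ht]
    have hαinv : α.mulVec (α⁻¹.mulVec (f t
          - chi t₀ t_f (t - ε) • cm.mulVec (wI t₀ t_f ε N cm c0 c1 α f hN (t - ε))
          - chi t₀ t_f (t + ε) • c1.mulVec (wI t₀ t_f ε N cm c0 c1 α f hN (t + ε))))
        = f t
          - chi t₀ t_f (t - ε) • cm.mulVec (wI t₀ t_f ε N cm c0 c1 α f hN (t - ε))
          - chi t₀ t_f (t + ε) • c1.mulVec (wI t₀ t_f ε N cm c0 c1 α f hN (t + ε)) := by
      rw [Matrix.mulVec_mulVec, Matrix.mul_nonsing_inv _ hα, Matrix.one_mulVec]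
    have hnb : ∀ s : ℝ, chi t₀ t_f s • cm.mulVec (uSol t₀ t_f ε N cm c0 c1 α f hN s)
        = chi t₀ t_f s • cm.mulVec (wI t₀ t_f ε N cm c0 c1 α f hN s) := by
      intro s
      by_cases hs : s ∈ Set.Icc t₀ t_f
      · rw [uSol, if_pos hs]
      · rw [chi, Set.indicator_of_notMem hs, zero_smul, zero_smul]
    have hnb' : ∀ s : ℝ, chi t₀ t_f s • c1.mulVec (uSol t₀ t_f ε N cm c0 c1 α f hN s)
        = chi t₀ t_f s • c1.mulVec (wI t₀ t_f ε N cm c0 c1 α f hN s) := by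
      intro s
      by_cases hs : s ∈ Set.Icc t₀ t_f
      · rw [uSol, if_pos hs]
      · rw [chi, Set.indicator_of_notMem hs, zero_smul, zero_smul]
    rw [hnb (t - ε), hnb' (t + ε), hχt, zero_smul, hout, hαinv]
    funext x
    simp only [Pi.add_apply, Pi.sub_apply, Pi.smul_apply, Pi.zero_apply, add_zero,
      Complex.real_smul]
    ring
end main

theorem uSol_unique {d : ℕ} {t₀ t_f ε : ℝ} {N : ℕ} {cm c0 c1 α : Matrix (Fin d) (Fin d) ℂ}
    (hε : 0 < ε) (hεle : ε ≤ t_f - t₀) (hN : 0 < N)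
    (hNB : ∀ t, mI t₀ t_f ε t ≤ N)
    (hα : IsUnit α.det)
    (hdet : ∀ mm, mm ≤ N → IsUnit (padM N mm cm c0 c1 α).det)
    (u : ℝ → Fin d → ℂ)
    (hu : ∀ t : ℝ, α.mulVec (u t)
      + (chi t₀ t_f (t - ε) • cm.mulVec (u (t - ε))
        + chi t₀ t_f t • c0.mulVec (u t)
        + chi t₀ t_f (t + ε) • c1.mulVec (u (t + ε))) = 0) :
    ∀ t : ℝ, u t = 0 := by
  have hIcc : ∀ t ∈ Set.Icc t₀ t_f, u t = 0 := by
    intro t ht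
    have hmemk : ∀ k : ℤ, (t + (k : ℝ) * ε ∈ Set.Icc t₀ t_f ↔ Ai t₀ ε t ≤ k ∧ k ≤ Bi t_f ε t) :=
      mem_Icc_iff hε t
    have hmc : (mI t₀ t_f ε t : ℤ) = Bi t_f ε t - Ai t₀ ε t + 1 := mI_cast hε hεle t
    have hmN : mI t₀ t_f ε t ≤ N := hNB t
    have h0 : Ai t₀ ε t ≤ 0 ∧ 0 ≤ Bi t_f ε t := (hmemk 0).mp (by simpa using ht)
    set A := Ai t₀ ε t with hA
    set B := Bi t_f ε t with hB
    set m := mI t₀ t_f ε t with hm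
    set i₀ := (-A).toNat with hi₀def
    have hi₀ : (i₀ : ℤ) = -A := Int.toNat_of_nonneg (by omega)
    have hi₀m : i₀ < m := by omega
    have hi₀N : i₀ < N := lt_of_lt_of_le hi₀m hmN
    set Evec : Fin N × Fin d → ℂ := fun q =>
      if h : (q.1 : ℕ) < m then u (t + ((A + ((q.1 : ℕ) : ℤ) : ℤ) : ℝ) * ε) q.2 else 0
      with hEdef
    have hEblock : ∀ (i : Fin N), (i : ℕ) < m →
        (fun y => Evec (i, y)) = u (t + ((A + ((i : ℕ) : ℤ) : ℤ) : ℝ) * ε) := by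
      intro i hi
      funext y
      rw [hEdef]
      exact dif_pos hi
    have hEzero : ∀ (i : Fin N), ¬ ((i : ℕ) < m) → (fun y => Evec (i, y)) = 0 := by
      intro i hi
      funext y
      rw [hEdef]
      exact dif_neg hi
    have hE : (padM N m cm c0 c1 α).mulVec Evec = 0 := by
      funext q
      obtain ⟨i, x⟩ := q
      rw [padM_expand, Dmat_mulVec]
      by_cases hi : (i : ℕ) < m
      · rw [if_pos hi, hEblock i hi]
        have hueq := hu (t + ((A + ((i : ℕ) : ℤ) : ℤ) : ℝ) * ε)
        have hsm : t + ((A + ((i : ℕ) : ℤ) : ℤ) : ℝ) * ε - ε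
            = t + ((A + ((i : ℕ) : ℤ) - 1 : ℤ) : ℝ) * ε := by push_cast; ring
        have hsp : t + ((A + ((i : ℕ) : ℤ) : ℤ) : ℝ) * ε + ε
            = t + ((A + ((i : ℕ) : ℤ) + 1 : ℤ) : ℝ) * ε := by push_cast; ring
        rw [hsm, hsp] at hueq
        have hχ0 : chi t₀ t_f (t + ((A + ((i : ℕ) : ℤ) : ℤ) : ℝ) * ε) = 1 := by
          rw [chi_eq hε, if_pos (by constructor <;> omega)]
        rw [hχ0, one_smul] at hueq
        -- lower neighbour
        by_cases hL : 0 < (i : ℕ)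
        · have hiN' : (i : ℕ) - 1 < N := by omega
          rw [Lmat_mulVec_eq N m cm _ i ⟨(i : ℕ) - 1, hiN'⟩ x
            (by show (i : ℕ) = (i : ℕ) - 1 + 1; omega) hi]
          have hχm : chi t₀ t_f (t + ((A + ((i : ℕ) : ℤ) - 1 : ℤ) : ℝ) * ε) = 1 := by
            rw [chi_eq hε, if_pos (by constructor <;> omega)]
          rw [hχm, one_smul] at hueq
          have harg : (fun y => Evec (⟨(i : ℕ) - 1, hiN'⟩, y))
              = u (t + ((A + ((i : ℕ) : ℤ) - 1 : ℤ) : ℝ) * ε) := by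
            rw [hEblock ⟨(i : ℕ) - 1, hiN'⟩ (by show (i : ℕ) - 1 < m; omega)]
            congr 2
            push_cast [show (((i : ℕ) - 1 : ℕ) : ℤ) = ((i : ℕ) : ℤ) - 1 by omega]
            ring
          rw [harg]
          by_cases hU : (i : ℕ) + 1 < m
          · have hiN'' : (i : ℕ) + 1 < N := lt_of_lt_of_le hU hmN
            rw [Umat_mulVec_eq N m c1 _ i ⟨(i : ℕ) + 1, hiN''⟩ x rfl hU]
            have hχp : chi t₀ t_f (t + ((A + ((i : ℕ) : ℤ) + 1 : ℤ) : ℝ) * ε) = 1 := by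
              rw [chi_eq hε, if_pos (by constructor <;> omega)]
            rw [hχp, one_smul] at hueq
            have harg' : (fun y => Evec (⟨(i : ℕ) + 1, hiN''⟩, y))
                = u (t + ((A + ((i : ℕ) : ℤ) + 1 : ℤ) : ℝ) * ε) := by
              rw [hEblock ⟨(i : ℕ) + 1, hiN''⟩ (by show (i : ℕ) + 1 < m; omega)]
              congr 2
              push_cast
              ring
            rw [harg']
            have := congrFun hueq x
            simp only [Pi.add_apply, Pi.zero_apply, Matrix.add_mulVec] at this ⊢
            linear_combination this
          · rw [Umat_mulVec_zero N m c1 _ i x hU]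
            have hχp : chi t₀ t_f (t + ((A + ((i : ℕ) : ℤ) + 1 : ℤ) : ℝ) * ε) = 0 := by
              rw [chi_eq hε, if_neg (by omega)]
            rw [hχp, zero_smul] at hueq
            have := congrFun hueq x
            simp only [Pi.add_apply, Pi.zero_apply, Matrix.add_mulVec, add_zero] at this ⊢
            linear_combination this
        · rw [Lmat_mulVec_zero N m cm _ i x (by omega)]
          have hχm : chi t₀ t_f (t + ((A + ((i : ℕ) : ℤ) - 1 : ℤ) : ℝ) * ε) = 0 := by
            rw [chi_eq hε, if_neg (by omega)]
          rw [hχm, zero_smul] at hueq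
          by_cases hU : (i : ℕ) + 1 < m
          · have hiN'' : (i : ℕ) + 1 < N := lt_of_lt_of_le hU hmN
            rw [Umat_mulVec_eq N m c1 _ i ⟨(i : ℕ) + 1, hiN''⟩ x rfl hU]
            have hχp : chi t₀ t_f (t + ((A + ((i : ℕ) : ℤ) + 1 : ℤ) : ℝ) * ε) = 1 := by
              rw [chi_eq hε, if_pos (by constructor <;> omega)]
            rw [hχp, one_smul] at hueq
            have harg' : (fun y => Evec (⟨(i : ℕ) + 1, hiN''⟩, y))
                = u (t + ((A + ((i : ℕ) : ℤ) + 1 : ℤ) : ℝ) * ε) := by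
              rw [hEblock ⟨(i : ℕ) + 1, hiN''⟩ (by show (i : ℕ) + 1 < m; omega)]
              congr 2
              push_cast
              ring
            rw [harg']
            have := congrFun hueq x
            simp only [Pi.add_apply, Pi.zero_apply, Matrix.add_mulVec, zero_add] at this ⊢
            linear_combination this
          · rw [Umat_mulVec_zero N m c1 _ i x hU]
            have hχp : chi t₀ t_f (t + ((A + ((i : ℕ) : ℤ) + 1 : ℤ) : ℝ) * ε) = 0 := by
              rw [chi_eq hε, if_neg (by omega)]
            rw [hχp, zero_smul] at hueq
            have := congrFun hueq x
            simp only [Pi.add_apply, Pi.zero_apply, Matrix.add_mulVec, add_zero, zero_add]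
              at this ⊢
            linear_combination this
      · rw [if_neg hi, hEzero i hi, Umat_mulVec_zero N m c1 _ i x (by omega),
          Lmat_mulVec_zero N m cm _ i x (by omega), Matrix.mulVec_zero]
        simp
    have hEz : Evec = 0 := by
      have h1 : Evec = (1 : Matrix (Fin N × Fin d) (Fin N × Fin d) ℂ).mulVec Evec :=
        (Matrix.one_mulVec _).symm
      rw [h1, ← Matrix.nonsing_inv_mul _ (hdet m hmN), ← Matrix.mulVec_mulVec, hE,
        Matrix.mulVec_zero]
    funext x
    have h4 : Evec (⟨i₀, hi₀N⟩, x) = u (t + ((A + ((i₀ : ℕ) : ℤ) : ℤ) : ℝ) * ε) x :=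
      congrFun (hEblock ⟨i₀, hi₀N⟩ hi₀m) x
    rw [show (A + ((i₀ : ℕ) : ℤ) : ℤ) = 0 by omega] at h4
    norm_num at h4
    rw [← h4, hEz]
    rfl
  intro t
  by_cases ht : t ∈ Set.Icc t₀ t_f
  · exact hIcc t ht
  · have hueq := hu t
    have hχt : chi t₀ t_f t = 0 := Set.indicator_of_notMem ht _
    have hside : ∀ (s : ℝ) (X : Matrix (Fin d) (Fin d) ℂ),
        chi t₀ t_f s • X.mulVec (u s) = 0 := by
      intro s X
      by_cases hs : s ∈ Set.Icc t₀ t_f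
      · rw [hIcc s hs, Matrix.mulVec_zero, smul_zero]
      · rw [chi, Set.indicator_of_notMem hs, zero_smul]
    rw [hside (t - ε) cm, hside (t + ε) c1, hχt, zero_smul] at hueq
    simp only [add_zero, zero_add] at hueq
    have : u t = α⁻¹.mulVec (α.mulVec (u t)) := by
      rw [Matrix.mulVec_mulVec, Matrix.nonsing_inv_mul _ hα, Matrix.one_mulVec]
    rw [this, hueq, Matrix.mulVec_zero]

section generic
variable {d : ℕ}

local notation "P4" d =>
  (Matrix (Fin d) (Fin d) ℂ) × (Matrix (Fin d) (Fin d) ℂ) ×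
    (Matrix (Fin d) (Fin d) ℂ) × (Matrix (Fin d) (Fin d) ℂ)

lemma continuous_padM (N mm : ℕ) :
    Continuous fun p : P4 d => padM N mm p.1 p.2.1 p.2.2.1 p.2.2.2 := by
  have hc1 : Continuous fun p : P4 d => p.1 := continuous_fst
  have hc2 : Continuous fun p : P4 d => p.2.1 := continuous_fst.comp continuous_snd
  have hc3 : Continuous fun p : P4 d => p.2.2.1 :=
    continuous_fst.comp (continuous_snd.comp continuous_snd)
  have hc4 : Continuous fun p : P4 d => p.2.2.2 :=
    continuous_snd.comp (continuous_snd.comp continuous_snd)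
  apply continuous_matrix
  intro q r
  simp only [padM, Matrix.add_apply]
  apply Continuous.add
  apply Continuous.add
  · simp only [Dmat, Matrix.of_apply]
    by_cases h : q.1 = r.1
    · simp only [if_pos h]
      by_cases h2 : (q.1 : ℕ) < mm
      · simp only [if_pos h2, Matrix.add_apply]
        exact (hc4.matrix_elem _ _).add (hc2.matrix_elem _ _)
      · simp only [if_neg h2]
        exact hc4.matrix_elem _ _
    · simp only [if_neg h]
      exact continuous_const
  · simp only [Umat, Matrix.of_apply]
    by_cases h : (r.1 : ℕ) = (q.1 : ℕ) + 1 ∧ (r.1 : ℕ) < mm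
    · simp only [if_pos h]
      exact hc3.matrix_elem _ _
    · simp only [if_neg h]
      exact continuous_const
  · simp only [Lmat, Matrix.of_apply]
    by_cases h : (q.1 : ℕ) = (r.1 : ℕ) + 1 ∧ (q.1 : ℕ) < mm
    · simp only [if_pos h]
      exact hc1.matrix_elem _ _
    · simp only [if_neg h]
      exact continuous_const

end generic

lemma det_add_smul_one {n : Type*} [Fintype n] [DecidableEq n]
    (Q : Matrix n n ℂ) (z : ℂ) :
    (Q + z • (1 : Matrix n n ℂ)).det = ((-Q).charpoly).eval z := by
  rw [Matrix.charpoly]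
  rw [show ((charmatrix (-Q)).det).eval z = (evalRingHom z) ((charmatrix (-Q)).det) from rfl]
  rw [RingHom.map_det]
  congr 1
  ext i j
  simp only [Matrix.map_apply, charmatrix_apply, coe_evalRingHom, Matrix.sub_apply,
    Matrix.diagonal_apply, Matrix.neg_apply, Matrix.add_apply, Matrix.smul_apply,
    Matrix.one_apply, smul_eq_mul]
  by_cases h : i = j <;> simp [h, eval_sub, mul_comm] <;> ring

/-- well-posedness of `α u + 𝒞 ⋆ (χ u) = f` for `N = 1`, for a generic
(open dense) set of quadruples `(c₋₁, c₀, c₁, α)`. -/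
theorem stmt0 (t₀ t_f ε : ℝ) (ht : t₀ < t_f) (hε : 0 < ε) (hεle : ε ≤ t_f - t₀)
    (d : ℕ) (hd : 1 ≤ d) :
    ∃ S : Set ((Matrix (Fin d) (Fin d) ℂ) × (Matrix (Fin d) (Fin d) ℂ) ×
        (Matrix (Fin d) (Fin d) ℂ) × (Matrix (Fin d) (Fin d) ℂ)),
      IsOpen S ∧ Dense S ∧
      ∀ cm c0 c1 α : Matrix (Fin d) (Fin d) ℂ, (cm, c0, c1, α) ∈ S →
        ∀ f : ℝ → Fin d → ℂ, ∃! u : ℝ → Fin d → ℂ, ∀ t : ℝ,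
          α.mulVec (u t)
            + (chi t₀ t_f (t - ε) • cm.mulVec (u (t - ε))
              + chi t₀ t_f t • c0.mulVec (u t)
              + chi t₀ t_f (t + ε) • c1.mulVec (u (t + ε))) = f t := by
  classical
  set N : ℕ := (⌊(t_f - t₀) / ε⌋).toNat + 1 with hNdef
  have hN : 0 < N := Nat.succ_pos _
  have hNB : ∀ t, mI t₀ t_f ε t ≤ N := fun t => mI_le hε hεle t
  refine ⟨{p | IsUnit p.2.2.2.det ∧
      ∀ mm ∈ Finset.range (N + 1), IsUnit (padM N mm p.1 p.2.1 p.2.2.1 p.2.2.2).det},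
    ?_, ?_, ?_⟩
  · -- open
    rw [Set.setOf_and]
    apply IsOpen.inter
    · have hcont : Continuous fun p : (Matrix (Fin d) (Fin d) ℂ) × (Matrix (Fin d) (Fin d) ℂ) ×
          (Matrix (Fin d) (Fin d) ℂ) × (Matrix (Fin d) (Fin d) ℂ) => p.2.2.2.det :=
        (continuous_snd.comp (continuous_snd.comp continuous_snd)).matrix_det
      have : {p : (Matrix (Fin d) (Fin d) ℂ) × (Matrix (Fin d) (Fin d) ℂ) ×
          (Matrix (Fin d) (Fin d) ℂ) × (Matrix (Fin d) (Fin d) ℂ) | IsUnit p.2.2.2.det}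
          = (fun p : (Matrix (Fin d) (Fin d) ℂ) × (Matrix (Fin d) (Fin d) ℂ) ×
          (Matrix (Fin d) (Fin d) ℂ) × (Matrix (Fin d) (Fin d) ℂ) => p.2.2.2.det) ⁻¹'
            ({(0 : ℂ)}ᶜ) := by
        ext p
        simp [isUnit_iff_ne_zero]
      rw [this]
      exact IsOpen.preimage hcont isOpen_compl_singleton
    · have : {p : (Matrix (Fin d) (Fin d) ℂ) × (Matrix (Fin d) (Fin d) ℂ) ×
          (Matrix (Fin d) (Fin d) ℂ) × (Matrix (Fin d) (Fin d) ℂ) |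
            ∀ mm ∈ Finset.range (N + 1), IsUnit (padM N mm p.1 p.2.1 p.2.2.1 p.2.2.2).det}
          = ⋂ mm ∈ Finset.range (N + 1), {p : (Matrix (Fin d) (Fin d) ℂ) ×
            (Matrix (Fin d) (Fin d) ℂ) × (Matrix (Fin d) (Fin d) ℂ) ×
            (Matrix (Fin d) (Fin d) ℂ) | IsUnit (padM N mm p.1 p.2.1 p.2.2.1 p.2.2.2).det} := by
        ext p
        simp
      rw [this]
      apply isOpen_biInter_finset
      intro mm _
      have hcont : Continuous fun p : (Matrix (Fin d) (Fin d) ℂ) × (Matrix (Fin d) (Fin d) ℂ) ×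
          (Matrix (Fin d) (Fin d) ℂ) × (Matrix (Fin d) (Fin d) ℂ) =>
            (padM N mm p.1 p.2.1 p.2.2.1 p.2.2.2).det :=
        (continuous_padM N mm).matrix_det
      have : {p : (Matrix (Fin d) (Fin d) ℂ) × (Matrix (Fin d) (Fin d) ℂ) ×
          (Matrix (Fin d) (Fin d) ℂ) × (Matrix (Fin d) (Fin d) ℂ) |
            IsUnit (padM N mm p.1 p.2.1 p.2.2.1 p.2.2.2).det}
          = (fun p : (Matrix (Fin d) (Fin d) ℂ) × (Matrix (Fin d) (Fin d) ℂ) ×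
          (Matrix (Fin d) (Fin d) ℂ) × (Matrix (Fin d) (Fin d) ℂ) =>
            (padM N mm p.1 p.2.1 p.2.2.1 p.2.2.2).det) ⁻¹' ({(0 : ℂ)}ᶜ) := by
        ext p
        simp [isUnit_iff_ne_zero]
      rw [this]
      exact IsOpen.preimage hcont isOpen_compl_singleton
  · -- dense
    rw [dense_iff_inter_open]
    rintro U hU ⟨p, hpU⟩
    obtain ⟨cm, c0, c1, α⟩ := p
    set φ : ℂ → (Matrix (Fin d) (Fin d) ℂ) × (Matrix (Fin d) (Fin d) ℂ) ×
        (Matrix (Fin d) (Fin d) ℂ) × (Matrix (Fin d) (Fin d) ℂ) :=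
      fun z => (cm, c0, c1, α + z • 1) with hφdef
    have hφc : Continuous φ := by
      apply continuous_const.prodMk
      apply continuous_const.prodMk
      apply continuous_const.prodMk
      exact continuous_const.add (continuous_id.smul continuous_const)
    have hφ0 : φ 0 = (cm, c0, c1, α) := by simp [hφdef]
    have h0V : (0 : ℂ) ∈ φ ⁻¹' U := by
      simp only [Set.mem_preimage, hφ0]
      exact hpU
    obtain ⟨δ, hδ, hball⟩ := Metric.isOpen_iff.mp (hU.preimage hφc) 0 h0V
    set Zset : Finset ℂ := ((-α).charpoly).roots.toFinset ∪
      (Finset.range (N + 1)).biUnion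
        (fun mm => ((-(padM N mm cm c0 c1 α)).charpoly).roots.toFinset) with hZdef
    have hinf : (Metric.ball (0 : ℂ) δ).Infinite := by
      have h1 : ((fun r : ℝ => (r : ℂ)) '' Set.Ioo 0 δ).Infinite :=
        (Set.Ioo_infinite hδ).image (Complex.ofReal_injective.injOn)
      apply h1.mono
      rintro z ⟨r, hr, rfl⟩
      simp only [Metric.mem_ball, Complex.dist_eq, sub_zero, Complex.norm_real, Real.norm_eq_abs]
      rw [abs_of_pos hr.1]
      exact hr.2
    obtain ⟨z, hz⟩ := (hinf.diff (Zset.finite_toSet)).nonempty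
    obtain ⟨hzball, hzZ⟩ := hz
    refine ⟨φ z, hball hzball, ?_, ?_⟩
    · -- α + z • 1 invertible
      show IsUnit (α + z • 1).det
      rw [det_add_smul_one, isUnit_iff_ne_zero]
      intro hc
      apply hzZ
      rw [hZdef]
      apply Finset.mem_union_left
      rw [Multiset.mem_toFinset, Polynomial.mem_roots']
      exact ⟨(Matrix.charpoly_monic _).ne_zero, hc⟩
    · intro mm hmm
      show IsUnit (padM N mm cm c0 c1 (α + z • 1)).det
      rw [padM_shift, det_add_smul_one, isUnit_iff_ne_zero]
      intro hc
      apply hzZ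
      rw [hZdef]
      apply Finset.mem_union_right
      rw [Finset.mem_biUnion]
      exact ⟨mm, hmm, by rw [Multiset.mem_toFinset, Polynomial.mem_roots']
                         exact ⟨(Matrix.charpoly_monic _).ne_zero, hc⟩⟩
  · -- well-posedness
    rintro cm c0 c1 α ⟨hα, hdets⟩ f
    have hdet : ∀ mm, mm ≤ N → IsUnit (padM N mm cm c0 c1 α).det := by
      intro mm hmm
      exact hdets mm (Finset.mem_range.mpr (by omega))
    refine ⟨uSol t₀ t_f ε N cm c0 c1 α f hN, fun t => uSol_solves hε hεle hN hNB hα hdet f t, ?_⟩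
    intro u' hu'
    have hhom : ∀ t : ℝ,
        α.mulVec ((fun s => u' s - uSol t₀ t_f ε N cm c0 c1 α f hN s) t)
          + (chi t₀ t_f (t - ε) • cm.mulVec
              ((fun s => u' s - uSol t₀ t_f ε N cm c0 c1 α f hN s) (t - ε))
            + chi t₀ t_f t • c0.mulVec
              ((fun s => u' s - uSol t₀ t_f ε N cm c0 c1 α f hN s) t)
            + chi t₀ t_f (t + ε) • c1.mulVec
              ((fun s => u' s - uSol t₀ t_f ε N cm c0 c1 α f hN s) (t + ε))) = 0 := by
      intro t
      have h1 := hu' t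
      have h2 := uSol_solves hε hεle hN hNB hα hdet f t
      funext x
      have e1 := congrFun h1 x
      have e2 := congrFun h2 x
      simp only [Pi.add_apply, Pi.smul_apply, Complex.real_smul] at e1 e2
      simp only [Matrix.mulVec_sub, Pi.add_apply, Pi.sub_apply, Pi.smul_apply, Pi.zero_apply,
        smul_sub, Complex.real_smul]
      linear_combination e1 - e2
    have hz := uSol_unique hε hεle hN hNB hα hdet _ hhom
    funext t
    have := hz t
    rw [sub_eq_zero] at this
    exact this
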